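/- The non-overlapping code S_{I,J}^{(k)}(n) given by Construction I' is non-expandable if k = n-1 or 1 \le k < n/2; that is, for every word x in \mathbb{Z}_q^n not in S_{I,J}^{(k)}(n), the code S_{I,J}^{(k)}(n) \cup \{x\} is overlapping. -/
import Mathlib

private lemma getD_of_split' {α} {s u r l : List α} (d : α) (h : s ++ u ++ r = l) (p : ℕ)
    (hp : p < u.length) : l.getD (s.length + p) d = u.getD p d := by
  subst h
  rw [List.getD_eq_getElem _ _ (by simp; omega), List.getD_eq_getElem _ _ hp]
  simp [List.getElem_append, hp]

private lemma getD_drop' {α} (l : List α) (i j : ℕ) (d : α) (h : i + j < l.length) :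
    (l.drop i).getD j d = l.getD (i + j) d := by
  rw [List.getD_eq_getElem _ _ (by simp; omega), List.getD_eq_getElem _ _ h, List.getElem_drop]

private lemma getD_mem' {α} {l : List α} {p : ℕ} (d : α) (hp : p < l.length) : l.getD p d ∈ l := by
  rw [List.getD_eq_getElem _ _ hp]; exact List.getElem_mem hp

/-- The non-overlapping code `S_{I,J}^{(k)}(n)` of Construction I' is
non-expandable if `k = n - 1` or `1 ≤ k < n/2`: for every word `x ∈ ℤ_q^n` not in the
code, the enlarged code fails the non-overlapping condition, i.e. some nonempty proper
prefix of one codeword equals a nonempty proper suffix of another (possibly the same). -/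
theorem stmt6 (n q k : ℕ) (hn : 2 ≤ n) (hq : 2 ≤ q) (hk1 : 1 ≤ k) (hk2 : k ≤ n - 1)
    (hcase : k = n - 1 ∨ 2 * k < n)
    (I J : Set (Fin q)) (hI : I.Nonempty) (hJ : J.Nonempty)
    (hd : Disjoint I J) (hu : I ∪ J = Set.univ)
    (S : Set (List (Fin q)))
    (hS : S = {w : List (Fin q) | w.length = n ∧ (∀ a ∈ w.take k, a ∈ I) ∧
      w.getD k ⟨0, by omega⟩ ∈ J ∧ w.getD (n - 1) ⟨0, by omega⟩ ∈ J ∧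
      ¬ ∃ u : List (Fin q), u.length = k ∧ (∀ a ∈ u, a ∈ I) ∧ u <:+: w.drop k}) :
    ∀ x : List (Fin q), x.length = n → x ∉ S →
      ∃ u ∈ insert x S, ∃ v ∈ insert x S, ∃ p : List (Fin q),
        p ≠ [] ∧ p ≠ u ∧ p ≠ v ∧ p <+: u ∧ p <:+ v := by
  classical
  intro x hxlen hxS
  obtain ⟨i0, hi0⟩ := hI
  obtain ⟨j0, hj0⟩ := hJ
  have hIofJ : ∀ a : Fin q, a ∉ I → a ∈ J := by
    intro a ha
    have h := Set.mem_univ a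
    rw [← hu] at h
    exact h.resolve_left ha
  have hJofI : ∀ a : Fin q, a ∉ J → a ∈ I := by
    intro a ha
    have h := Set.mem_univ a
    rw [← hu] at h
    exact h.resolve_right ha
  have hdisj : ∀ a : Fin q, a ∈ I → a ∈ J → False := fun a h1 h2 =>
    Set.disjoint_left.mp hd h1 h2
  -- membership builder
  have memS : ∀ w : List (Fin q), w.length = n →
      (∀ p, p < k → w.getD p i0 ∈ I) →
      w.getD k i0 ∈ J →
      w.getD (n-1) i0 ∈ J →
      (¬ ∃ u : List (Fin q), u.length = k ∧ (∀ a ∈ u, a ∈ I) ∧ u <:+: w.drop k) →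
      w ∈ S := by
    intro w h1 h2 h3 h4 h5
    rw [hS]
    refine ⟨h1, ?_, ?_, ?_, h5⟩
    · intro a ha
      rw [List.mem_iff_getElem] at ha
      obtain ⟨idx, hidx, rfl⟩ := ha
      have hidx' : idx < k := by simp at hidx; omega
      rw [List.getElem_take]
      have := h2 idx hidx'
      rwa [List.getD_eq_getElem _ _ (by omega)] at this
    · rw [List.getD_eq_getElem _ _ (by omega)]
      have := h3
      rwa [List.getD_eq_getElem _ _ (by omega)] at this
    · rw [List.getD_eq_getElem _ _ (by omega)]
      have := h4
      rwa [List.getD_eq_getElem _ _ (by omega)] at this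
  have hCmem : x.getD (n-1) i0 ∈ I ∨ x.getD (n-1) i0 ∈ J := by
    by_cases h : x.getD (n-1) i0 ∈ I
    · exact Or.inl h
    · exact Or.inr (hIofJ _ h)
  rcases hCmem with hC | hC
  · -- Case 1: last letter of x is in I
    set a : Fin q := x.getD (n-1) i0 with ha
    set w : List (Fin q) := List.replicate k a ++ List.replicate (n-k) j0 with hw
    have hwlen : w.length = n := by simp [hw]; omega
    have hwget : ∀ idx, idx < n → w.getD idx i0 = if idx < k then a else j0 := by
      intro idx h
      rw [List.getD_eq_getElem _ _ (by rw [hwlen]; exact h)]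
      simp only [hw, List.getElem_append, List.length_replicate, List.getElem_replicate]
      split_ifs with h1
      · rfl
      · rfl
    have hwS : w ∈ S := by
      refine memS w hwlen ?_ ?_ ?_ ?_
      · intro p hp
        rw [hwget p (by omega), if_pos hp]; exact hC
      · rw [hwget k (by omega), if_neg (by omega)]; exact hj0
      · rw [hwget (n-1) (by omega), if_neg (by omega)]; exact hj0
      · rintro ⟨u, hul, huI, s, r, hsr⟩
        have hlen := congrArg List.length hsr
        simp [hwlen] at hlen
        have e1 : (w.drop k).getD (s.length + 0) i0 = u.getD 0 i0 :=
          getD_of_split' i0 hsr 0 (by omega)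
        rw [getD_drop' w k (s.length + 0) i0 (by rw [hwlen]; omega)] at e1
        rw [hwget (k + (s.length + 0)) (by omega), if_neg (by omega)] at e1
        have hJ0 : u.getD 0 i0 ∈ J := e1 ▸ hj0
        exact hdisj _ (huI _ (getD_mem' i0 (by omega))) hJ0
    have hsuf : x.drop (n-1) = [a] := by
      apply List.ext_getElem
      · simp [hxlen]; omega
      · intro idx h1 h2
        simp only [List.length_drop, hxlen] at h1
        have hidx : idx = 0 := by omega
        subst hidx
        rw [List.getElem_drop]
        simp only [List.getElem_singleton, ha]
        rw [List.getD_eq_getElem _ _ (by omega)]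
        rfl
    refine ⟨w, Set.mem_insert_iff.mpr (Or.inr hwS), x, Set.mem_insert _ _, [a], ?_, ?_, ?_, ?_, ?_⟩
    · simp
    · intro h
      have := congrArg List.length h
      simp [hwlen] at this; omega
    · intro h
      have := congrArg List.length h
      simp [hxlen] at this; omega
    · refine ⟨List.replicate (k-1) a ++ List.replicate (n-k) j0, ?_⟩
      rw [hw]
      rw [show k = (k-1)+1 by omega, List.replicate_succ]
      simp
    · rw [← hsuf]
      exact List.drop_suffix _ _
  · -- last letter of x in J
    by_cases hA : ∀ p, p < k → x.getD p i0 ∈ I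
    · -- Case 3: a run of k letters from I starting at position ≥ 1
      have hrun : ∃ m, 1 ≤ m ∧ m + k ≤ n ∧ ∀ p, p < k → x.getD (m+p) i0 ∈ I := by
        by_cases hB : x.getD k i0 ∈ I
        · refine ⟨1, le_refl _, by omega, ?_⟩
          intro p hp
          rcases Nat.lt_or_ge (1+p) k with h | h
          · rw [show 1 + p = 1 + p by rfl]
            exact hA (1+p) h
          · rw [show 1 + p = k by omega]
            exact hB
        · have hB' : x.getD k i0 ∈ J := hIofJ _ hB
          have hD : ∃ u : List (Fin q), u.length = k ∧ (∀ a ∈ u, a ∈ I) ∧ u <:+: x.drop k := by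
            by_contra hD
            exact hxS (memS x hxlen hA hB' hC hD)
          obtain ⟨u, hul, huI, s, r, hsr⟩ := hD
          have hlen := congrArg List.length hsr
          simp [hxlen] at hlen
          refine ⟨k + s.length, by omega, by omega, ?_⟩
          intro p hp
          have e1 : (x.drop k).getD (s.length + p) i0 = u.getD p i0 :=
            getD_of_split' i0 hsr p (by omega)
          rw [getD_drop' x k (s.length + p) i0 (by rw [hxlen]; omega)] at e1
          rw [show k + s.length + p = k + (s.length + p) by omega, e1]
          exact huI _ (getD_mem' i0 (by omega))
      obtain ⟨m0, hm0⟩ := hrun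
      set P : ℕ → Prop := fun m => 1 ≤ m ∧ m + k ≤ n ∧ ∀ p, p < k → x.getD (m+p) i0 ∈ I
        with hP
      set M := Nat.findGreatest P n with hM
      have hPM : P M := Nat.findGreatest_spec (m := m0) (by omega) hm0
      have hmax : ∀ m', M < m' → m' ≤ n → ¬ P m' := fun m' h1 h2 =>
        Nat.findGreatest_is_greatest h1 h2
      obtain ⟨hM1, hMk, hMrun⟩ := hPM
      have hMkn : M + k < n := by
        rcases Nat.lt_or_ge (M + k) n with h | h
        · exact h
        · exfalso
          have hi : x.getD (M + (k-1)) i0 ∈ I := hMrun (k-1) (by omega)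
          rw [show M + (k-1) = n - 1 by omega] at hi
          exact hdisj _ hi hC
      have hnext : x.getD (M+k) i0 ∈ J := by
        by_cases h : x.getD (M+k) i0 ∈ I
        · exfalso
          refine hmax (M+1) (by omega) (by omega) ⟨by omega, by omega, ?_⟩
          intro p hp
          rcases Nat.lt_or_ge (1+p) k with h2 | h2
          · rw [show M + 1 + p = M + (1+p) by omega]
            exact hMrun (1+p) h2
          · rw [show M + 1 + p = M + k by omega]
            exact h
        · exact hIofJ _ h
      set w : List (Fin q) := x.drop M ++ List.replicate M j0 with hw
      have hwlen : w.length = n := by simp [hw, hxlen]; omega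
      have hwget : ∀ idx, idx < n → w.getD idx i0 =
          if idx < n - M then x.getD (M + idx) i0 else j0 := by
        intro idx h
        rw [List.getD_eq_getElem _ _ (by rw [hwlen]; exact h)]
        simp only [hw, List.getElem_append, List.length_drop, hxlen, List.getElem_replicate]
        split_ifs with h1
        · rw [List.getElem_drop, List.getD_eq_getElem _ _ (by omega)]
        · rfl
      have hwS : w ∈ S := by
        refine memS w hwlen ?_ ?_ ?_ ?_
        · intro p hp
          rw [hwget p (by omega), if_pos (by omega)]
          exact hMrun p hp
        · rw [hwget k (by omega), if_pos (by omega)]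
          exact hnext
        · rw [hwget (n-1) (by omega), if_neg (by omega)]
          exact hj0
        · rintro ⟨u, hul, huI, s, r, hsr⟩
          have hlen := congrArg List.length hsr
          simp [hwlen] at hlen
          rcases Nat.lt_or_ge (k + s.length + (k-1)) (n - M) with hcas | hcas
          · -- run fully inside x-part: contradicts maximality
            refine hmax (M + k + s.length) (by omega) (by omega) ⟨by omega, by omega, ?_⟩
            intro p hp
            have e1 : (w.drop k).getD (s.length + p) i0 = u.getD p i0 :=
              getD_of_split' i0 hsr p (by omega)
            rw [getD_drop' w k (s.length + p) i0 (by rw [hwlen]; omega)] at e1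
            rw [hwget (k + (s.length + p)) (by omega), if_pos (by omega)] at e1
            rw [show M + k + s.length + p = M + (k + (s.length + p)) by omega, e1]
            exact huI _ (getD_mem' i0 (by omega))
          · -- run touches the replicate part
            have hpk : n - M - k - s.length < k := by omega
            have e1 : (w.drop k).getD (s.length + (n - M - k - s.length)) i0
                = u.getD (n - M - k - s.length) i0 :=
              getD_of_split' i0 hsr _ (by omega)
            rw [getD_drop' w k _ i0 (by rw [hwlen]; omega)] at e1
            rw [hwget (k + (s.length + (n - M - k - s.length))) (by omega),
              if_neg (by omega)] at e1
            have hJ0 : u.getD (n - M - k - s.length) i0 ∈ J := e1 ▸ hj0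
            exact hdisj _ (huI _ (getD_mem' i0 (by omega))) hJ0
      refine ⟨w, Set.mem_insert_iff.mpr (Or.inr hwS), x, Set.mem_insert _ _, x.drop M,
        ?_, ?_, ?_, ?_, List.drop_suffix _ _⟩
      · intro h
        have := congrArg List.length h
        simp [hxlen] at this; omega
      · intro h
        have := congrArg List.length h
        simp [hxlen, hwlen] at this
        omega
      · intro h
        have := congrArg List.length h
        simp [hxlen] at this; omega
      · exact ⟨List.replicate M j0, rfl⟩
    · -- Case 2: some of the first k letters of x lies in J
      push_neg at hA
      have hex : ∃ m, m < k ∧ x.getD m i0 ∈ J := by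
        obtain ⟨m, hm, hmI⟩ := hA
        exact ⟨m, hm, hIofJ _ hmI⟩
      set t := Nat.find hex with ht
      obtain ⟨htk, htJ⟩ := Nat.find_spec hex
      have htmin : ∀ r, r < t → x.getD r i0 ∈ I := by
        intro r hr
        have h2 := Nat.find_min hex hr
        simp only [not_and] at h2
        refine hJofI _ ?_
        intro hcon
        exact h2 (by omega) hcon
      have hpre_pref : x.take (t+1) <+: x := List.take_prefix _ _
      have hpre_len : (x.take (t+1)).length = t+1 := by simp [hxlen]; omega
      rcases hcase with hc1 | hc2
      · -- k = n - 1
        set w : List (Fin q) := List.replicate (n - (t+1)) i0 ++ x.take (t+1) with hw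
        have hwlen : w.length = n := by simp [hw, hxlen]; omega
        have hwget : ∀ idx, idx < n → w.getD idx i0 =
            if idx < n - (t+1) then i0 else x.getD (idx - (n - (t+1))) i0 := by
          intro idx h
          rw [List.getD_eq_getElem _ _ (by rw [hwlen]; exact h)]
          simp only [hw, List.getElem_append, List.length_replicate, List.getElem_replicate,
            List.getElem_take]
          split_ifs with h1
          · rfl
          · rw [List.getD_eq_getElem _ _ (by omega)]
        have hwS : w ∈ S := by
          refine memS w hwlen ?_ ?_ ?_ ?_
          · intro p hp
            rw [hwget p (by omega)]
            split_ifs with h2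
            · exact hi0
            · exact htmin _ (by omega)
          · rw [hwget k (by omega), if_neg (by omega), show k - (n - (t+1)) = t by omega]
            exact htJ
          · rw [hwget (n-1) (by omega), if_neg (by omega), show n - 1 - (n - (t+1)) = t by omega]
            exact htJ
          · rintro ⟨u, hul, huI, s, r, hsr⟩
            have hlen := congrArg List.length hsr
            simp [hwlen] at hlen
            have e1 : (w.drop k).getD (s.length + 0) i0 = u.getD 0 i0 :=
              getD_of_split' i0 hsr 0 (by omega)
            rw [getD_drop' w k (s.length + 0) i0 (by rw [hwlen]; omega)] at e1
            rw [hwget (k + (s.length + 0)) (by omega), if_neg (by omega),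
              show k + (s.length + 0) - (n - (t+1)) = t by omega] at e1
            have hJ0 : u.getD 0 i0 ∈ J := e1 ▸ htJ
            exact hdisj _ (huI _ (getD_mem' i0 (by omega))) hJ0
        refine ⟨x, Set.mem_insert _ _, w, Set.mem_insert_iff.mpr (Or.inr hwS), x.take (t+1),
          ?_, ?_, ?_, hpre_pref, List.suffix_append _ _⟩
        · intro h
          have := congrArg List.length h
          rw [hpre_len] at this; simp at this
        · intro h
          have := congrArg List.length h
          rw [hpre_len, hxlen] at this; omega
        · intro h
          have := congrArg List.length h
          rw [hpre_len, hwlen] at this; omega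
      · -- 2k < n
        set w : List (Fin q) :=
          List.replicate k i0 ++ (List.replicate (n - k - (t+1)) j0 ++ x.take (t+1)) with hw
        have hwlen : w.length = n := by simp [hw, hxlen]; omega
        have hwget : ∀ idx, idx < n → w.getD idx i0 =
            if idx < k then i0 else if idx - k < n - k - (t+1) then j0
              else x.getD (idx - k - (n - k - (t+1))) i0 := by
          intro idx h
          rw [List.getD_eq_getElem _ _ (by rw [hwlen]; exact h)]
          simp only [hw, List.getElem_append, List.length_replicate, List.getElem_replicate,
            List.getElem_take]
          split_ifs with h1 h2
          · rfl
          · rfl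
          · rw [List.getD_eq_getElem _ _ (by omega)]
        have hwS : w ∈ S := by
          refine memS w hwlen ?_ ?_ ?_ ?_
          · intro p hp
            rw [hwget p (by omega), if_pos hp]
            exact hi0
          · rw [hwget k (by omega), if_neg (by omega), if_pos (by omega)]
            exact hj0
          · rw [hwget (n-1) (by omega), if_neg (by omega), if_neg (by omega),
              show n - 1 - k - (n - k - (t+1)) = t by omega]
            exact htJ
          · rintro ⟨u, hul, huI, s, r, hsr⟩
            have hlen := congrArg List.length hsr
            simp [hwlen] at hlen
            rcases Nat.lt_or_ge (k + s.length) (n - (t+1)) with hcas | hcas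
            · -- first letter of u lands in the j0-block
              have e1 : (w.drop k).getD (s.length + 0) i0 = u.getD 0 i0 :=
                getD_of_split' i0 hsr 0 (by omega)
              rw [getD_drop' w k (s.length + 0) i0 (by rw [hwlen]; omega)] at e1
              rw [hwget (k + (s.length + 0)) (by omega), if_neg (by omega),
                if_pos (by omega)] at e1
              have hJ0 : u.getD 0 i0 ∈ J := e1 ▸ hj0
              exact hdisj _ (huI _ (getD_mem' i0 (by omega))) hJ0
            · -- last letter of u lands on x[t] ∈ J
              have e1 : (w.drop k).getD (s.length + (k-1)) i0 = u.getD (k-1) i0 :=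
                getD_of_split' i0 hsr (k-1) (by omega)
              rw [getD_drop' w k (s.length + (k-1)) i0 (by rw [hwlen]; omega)] at e1
              rw [hwget (k + (s.length + (k-1))) (by omega), if_neg (by omega),
                if_neg (by omega),
                show k + (s.length + (k-1)) - k - (n - k - (t+1)) = t by omega] at e1
              have hJ0 : u.getD (k-1) i0 ∈ J := e1 ▸ htJ
              exact hdisj _ (huI _ (getD_mem' i0 (by omega))) hJ0
        refine ⟨x, Set.mem_insert _ _, w, Set.mem_insert_iff.mpr (Or.inr hwS), x.take (t+1),
          ?_, ?_, ?_, hpre_pref, ?_⟩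
        · intro h
          have := congrArg List.length h
          rw [hpre_len] at this; simp at this
        · intro h
          have := congrArg List.length h
          rw [hpre_len, hxlen] at this; omega
        · intro h
          have := congrArg List.length h
          rw [hpre_len, hwlen] at this; omega
        · rw [hw, ← List.append_assoc]
          exact List.suffix_append _ _
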